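/- N_4(ℤ) = 8: every 4-element set A of perfect squares of integers satisfies |A+A| ≥ 8, and there exists a 4-element set A of perfect squares of integers (for example A = {49, 169, 289, 529}) with |A+A| = 8. -/

import Mathlib

open Pointwise

set_option maxHeartbeats 1000000

/-- `sqSumsetMin R n` is the infimum of `|A + A|` over all `n`-element subsets `A` of the
set of squares `S(R) = {a^2 : a ∈ R}` of the ring `R`. -/
noncomputable def sqSumsetMin (R : Type*) [CommRing R] [DecidableEq R] (n : ℕ) : ℕ :=
  sInf {k | ∃ A : Finset R, (∀ a ∈ A, IsSquare a) ∧ A.card = n ∧ (A + A).card = k}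

section Auxiliary


/-- `r² = 2q²` forces `q = 0`. -/
lemma sq_ne_two_mul_sq : ∀ q r : ℕ, r * r = 2 * (q * q) → q = 0 := by
  intro q
  induction q using Nat.strong_induction_on with
  | _ q ih =>
    intro r h
    rcases Nat.eq_zero_or_pos q with hq | hq
    · exact hq
    · have hr2 : ∃ t, r = 2 * t := by
        rcases Nat.even_or_odd r with ⟨t, ht⟩ | ⟨k, hk⟩
        · exact ⟨t, by omega⟩
        · exfalso
          have : r * r = 4 * (k * k) + 4 * k + 1 := by subst hk; ring
          omega
      obtain ⟨t, ht⟩ := hr2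
      subst ht
      have h2 : q * q = 2 * (t * t) := by nlinarith
      have htq : t < q := by nlinarith
      have := ih t htq q h2
      subst this
      simpa using h2

/-- squares of odds are 1 mod 8; squares of evens are 0 or 4 mod 8 -/
lemma sq_mod8 (a : ℕ) :
    (a % 2 = 1 ∧ a * a % 8 = 1) ∨ (a % 2 = 0 ∧ (a * a % 8 = 0 ∨ a * a % 8 = 4)) := by
  rcases Nat.even_or_odd a with ⟨k, hk⟩ | ⟨k, hk⟩
  · right
    constructor
    · omega
    · have h : a * a = 4 * (k * k) := by subst hk; ring
      rcases Nat.even_or_odd k with ⟨m, hm⟩ | ⟨m, hm⟩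
      · left; subst hm
        have : a * a = 8 * (2 * (m * m)) := by rw [h]; ring
        omega
      · right; subst hm
        have : a * a = 8 * (2 * (m * m) + 2 * m) + 4 := by rw [h]; ring
        omega
  · left
    constructor
    · omega
    · have h : a * a = 4 * (k * (k+1)) + 1 := by subst hk; ring
      obtain ⟨m, hm⟩ := Nat.even_mul_succ_self k
      have : a * a = 8 * m + 1 := by omega
      omega

lemma sq_mod3 (a : ℕ) : a * a % 3 = 0 ∨ a * a % 3 = 1 := by
  have h := Nat.mul_mod a a 3
  have : a % 3 = 0 ∨ a % 3 = 1 ∨ a % 3 = 2 := by omega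
  rcases this with h1 | h1 | h1 <;> rw [h, h1] <;> omega

lemma three_dvd_of_sq (a : ℕ) (h : a * a % 3 = 0) : a % 3 = 0 := by
  have hm := Nat.mul_mod a a 3
  have : a % 3 = 0 ∨ a % 3 = 1 ∨ a % 3 = 2 := by omega
  rcases this with h1 | h1 | h1 <;> rw [h1] at hm <;> omega

/-- Four number lemma. -/
lemma four_split (a b c d : ℕ) (ha : 0 < a) (hb : 0 < b) (hc : 0 < c)
    (h : a * b = c * d) (hab : Nat.Coprime a b) (hcd : Nat.Coprime c d) :
    ∃ p q r s : ℕ, 0 < p ∧ 0 < q ∧ 0 < r ∧ 0 < s ∧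
      a = p * q ∧ c = p * r ∧ d = q * s ∧ b = r * s := by
  set p := Nat.gcd a c with hp
  have hp0 : 0 < p := Nat.gcd_pos_of_pos_left _ ha
  have hpa : p ∣ a := Nat.gcd_dvd_left _ _
  have hpc : p ∣ c := Nat.gcd_dvd_right _ _
  obtain ⟨q, hq⟩ := hpa
  obtain ⟨r, hr⟩ := hpc
  have hq0 : 0 < q := by
    rcases Nat.eq_zero_or_pos q with h0 | h0
    · subst h0; simp at hq; omega
    · exact h0
  have hr0 : 0 < r := by
    rcases Nat.eq_zero_or_pos r with h0 | h0
    · subst h0; simp at hr; omega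
    · exact h0
  have hqr : Nat.Coprime q r := by
    have := Nat.coprime_div_gcd_div_gcd (m := a) (n := c) hp0
    have e1 : a / p = q := by rw [hq]; exact Nat.mul_div_cancel_left _ hp0
    have e2 : c / p = r := by rw [hr]; exact Nat.mul_div_cancel_left _ hp0
    rwa [e1, e2] at this
  have hqbrd : q * b = r * d := by
    have : p * (q * b) = p * (r * d) := by
      rw [← mul_assoc, ← mul_assoc, ← hq, ← hr]; exact h
    exact Nat.eq_of_mul_eq_mul_left hp0 this
  have hqd : q ∣ d := hqr.dvd_of_dvd_mul_left ⟨b, hqbrd.symm⟩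
  obtain ⟨s, hs⟩ := hqd
  have hs0 : 0 < s := by
    rcases Nat.eq_zero_or_pos s with h0 | h0
    · exfalso; subst h0; simp at hs
      rw [hs, mul_zero] at hqbrd
      have := Nat.mul_eq_zero.mp hqbrd
      omega
    · exact h0
  have hb' : b = r * s := by
    have : q * b = q * (r * s) := by rw [hqbrd, hs]; ring
    exact Nat.eq_of_mul_eq_mul_left hq0 this
  exact ⟨p, q, r, s, hp0, hq0, hr0, hs0, hq, hr, hs, hb'⟩

set_option maxHeartbeats 1000000


lemma coprime_int_of_nat {a b : ℕ} (h : Nat.Coprime a b) : IsCoprime (a : ℤ) (b : ℤ) :=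
  Int.isCoprime_iff_gcd_eq_one.mpr (by simpa [Int.gcd_natCast_natCast] using h)

lemma sq_lt_sq_nat {a b : ℕ} (h : a * a < b * b) : a < b := by
  by_contra hc
  push_neg at hc
  exact absurd (Nat.mul_le_mul hc hc) (by omega)

lemma sq_lt_sq_nat' {a b : ℕ} (h : a < b) : a * a < b * b := by nlinarith

/-- Core descent step. -/
lemma core_descent (e f g h : ℕ) (he : 0 < e) (hf : 0 < f) (hg : 0 < g) (hh : 0 < h)
    (hef : Nat.Coprime e f) (hgh : Nat.Coprime g h)
    (heh : Nat.Coprime e h) (hfg : Nat.Coprime f g)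
    (E1 : e * e = f * f + g * h) (E2 : h * h = g * g + 2 * (e * f)) :
    ∃ w x y z : ℕ, w < x ∧ x < y ∧ y < z ∧
      w * w + y * y = 2 * (x * x) ∧ x * x + z * z = 2 * (y * y) ∧ z ≤ max g h := by
  have hfe : f < e := by
    apply sq_lt_sq_nat
    have : 1 ≤ g * h := Nat.one_le_iff_ne_zero.mpr (by positivity)
    omega
  -- parity: e + f is odd
  have hefodd : (e + f) % 2 = 1 := by
    by_contra hpar
    have hne : ¬ (e % 2 = 0 ∧ f % 2 = 0) := by
      rintro ⟨h1, h2⟩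
      have : 2 ∣ Nat.gcd e f := Nat.dvd_gcd (by omega) (by omega)
      rw [hef] at this; omega
    have heo : e % 2 = 1 := by omega
    have hfo : f % 2 = 1 := by omega
    have hefm : (e * f) % 2 = 1 := by rw [Nat.mul_mod, heo, hfo]
    have h8e := sq_mod8 e
    have h8f := sq_mod8 f
    have hgh8 : (g * h) % 8 = 0 := by omega
    rcases sq_mod8 g with ⟨hg1, hg2⟩ | ⟨hg1, hg2⟩ <;>
      rcases sq_mod8 h with ⟨hh1, hh2⟩ | ⟨hh1, hh2⟩
    · -- both odd : g*h odd contradicts hgh8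
      have : (g * h) % 2 = 1 := by rw [Nat.mul_mod, hg1, hh1]
      omega
    · omega
    · omega
    · have : 2 ∣ Nat.gcd g h := Nat.dvd_gcd (by omega) (by omega)
      rw [hgh] at this; omega
  -- g and h are both odd
  have hghodd : g % 2 = 1 ∧ h % 2 = 1 := by
    have h8e := sq_mod8 e
    have h8f := sq_mod8 f
    have hghdd : (g * h) % 2 = 1 := by
      rcases h8e with ⟨he1, he2⟩ | ⟨he1, he2⟩ <;>
        rcases h8f with ⟨hf1, hf2⟩ | ⟨hf1, hf2⟩ <;> omega
    rcases sq_mod8 g with ⟨hg1, _⟩ | ⟨hg1, _⟩ <;>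
      rcases sq_mod8 h with ⟨hh1, _⟩ | ⟨hh1, _⟩
    · exact ⟨hg1, hh1⟩
    · rw [Nat.mul_mod, hh1] at hghdd; omega
    · rw [Nat.mul_mod, hg1] at hghdd; simp at hghdd
    · rw [Nat.mul_mod, hg1] at hghdd; simp at hghdd
  obtain ⟨k, hk⟩ : ∃ k, e = f + k := ⟨e - f, by omega⟩
  have hk0 : 0 < k := by omega
  have hprod : g * h = k * (2 * f + k) := by
    have hex : (f+k)*(f+k) = f*f + (k*(2*f+k)) := by ring
    rw [hk] at E1
    omega
  have hkcop : Nat.Coprime k (2 * f + k) := by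
    set d := Nat.gcd k (2 * f + k) with hd
    have hd1 : d ∣ k := Nat.gcd_dvd_left _ _
    have hd2 : d ∣ 2 * f + k := Nat.gcd_dvd_right _ _
    have hd3 : d ∣ 2 * f := by
      have := Nat.dvd_sub hd2 hd1
      simpa using this
    have hd4 : d ∣ 2 * e := by
      have : d ∣ 2 * k := Dvd.dvd.mul_left hd1 2
      have h2e : 2 * e = 2 * f + 2 * k := by omega
      rw [h2e]; exact dvd_add hd3 this
    have hd5 : d ∣ 2 := by
      have := Nat.dvd_gcd hd4 hd3
      rwa [Nat.gcd_mul_left, hef, mul_one] at this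
    rcases (Nat.dvd_prime Nat.prime_two).mp hd5 with h1 | h1
    · exact h1
    · exfalso
      obtain ⟨c, hc⟩ := hd2
      rw [h1] at hc
      omega
  -- four-split
  obtain ⟨p, q, r, s, hp0, hq0, hr0, hs0, hgpq, hkpr, hqs, hhrs⟩ :=
    four_split g h k (2 * f + k) hg hh hk0 hprod hgh hkcop
  -- coprimality of the pieces
  have hps : Nat.Coprime p s :=
    Nat.Coprime.coprime_dvd_left ⟨q, hgpq⟩
      (Nat.Coprime.coprime_dvd_right ⟨r, by rw [hhrs, mul_comm]⟩ hgh)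
  have hrq : Nat.Coprime r q :=
    Nat.Coprime.coprime_dvd_left ⟨s, hhrs⟩
      (Nat.Coprime.coprime_dvd_right ⟨p, by rw [hgpq, mul_comm]⟩ hgh.symm)
  -- move to ℤ
  have E2z : ((r:ℤ)*s)*((r:ℤ)*s) = ((p:ℤ)*q)*((p:ℤ)*q) + 2*((e:ℤ)*f) := by
    have : ((h:ℤ))*h = (g:ℤ)*g + 2*((e:ℤ)*f) := by exact_mod_cast E2
    rw [hgpq, hhrs] at this
    push_cast at this ⊢
    linarith
  have h2e : 2*(e:ℤ) = (q:ℤ)*s + (p:ℤ)*r := by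
    have hn : 2*e = q*s + p*r := by omega
    exact_mod_cast hn
  have h2f : 2*(f:ℤ) = (q:ℤ)*s - (p:ℤ)*r := by
    have hn : 2*f + p*r = q*s := by omega
    have := congrArg (fun t : ℕ => (t : ℤ)) hn
    push_cast at this
    linarith
  have h4 : (2*(e:ℤ))*(2*(f:ℤ)) = ((q:ℤ)*s+(p:ℤ)*r)*((q:ℤ)*s-(p:ℤ)*r) := by
    rw [h2e, h2f]
  have key : (s:ℤ)^2*(2*(r:ℤ)^2 - (q:ℤ)^2) = (p:ℤ)^2*(2*(q:ℤ)^2 - (r:ℤ)^2) := by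
    linear_combination (2:ℤ)*E2z + h4
  have hp2ne : ((p:ℤ)^2) ≠ 0 := by positivity
  have hdvd : ((p:ℤ)^2) ∣ (2*(r:ℤ)^2 - (q:ℤ)^2) := by
    have hco : IsCoprime ((p:ℤ)^2) ((s:ℤ)^2) := (coprime_int_of_nat hps).pow
    exact hco.dvd_of_dvd_mul_left ⟨2*(q:ℤ)^2 - (r:ℤ)^2, key⟩
  obtain ⟨T, hT⟩ := hdvd
  have hY : 2*(q:ℤ)^2 - (r:ℤ)^2 = (s:ℤ)^2 * T := by
    apply mul_left_cancel₀ hp2ne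
    linear_combination (-1:ℤ)*key + (s:ℤ)^2*hT
  have hT0 : 0 < T := by
    have h1 : ((r:ℤ)^2 + (q:ℤ)^2) = ((p:ℤ)^2+(s:ℤ)^2)*T := by
      linear_combination hT + hY
    have h2 : (0:ℤ) < (p:ℤ)^2+(s:ℤ)^2 := by positivity
    have h3 : (0:ℤ) < (r:ℤ)^2+(q:ℤ)^2 := by
      have : (0:ℤ) < (r:ℤ) := by exact_mod_cast hr0
      positivity
    have h4 : (0:ℤ) < ((p:ℤ)^2+(s:ℤ)^2)*T := h1 ▸ h3
    rcases mul_pos_iff.mp h4 with ⟨_, hT⟩ | ⟨hc, _⟩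
    · exact hT
    · linarith
  have h3r : 3*(r:ℤ)^2 = (2*(p:ℤ)^2 + (s:ℤ)^2)*T := by linear_combination 2*hT + hY
  have h3q : 3*(q:ℤ)^2 = ((p:ℤ)^2 + 2*(s:ℤ)^2)*T := by linear_combination hT + 2*hY
  have hTd3 : T ∣ 3 := by
    obtain ⟨u, v, huv⟩ := (coprime_int_of_nat hrq).pow (n := 2) (m := 2)
    exact ⟨u*(2*(p:ℤ)^2+(s:ℤ)^2) + v*((p:ℤ)^2+2*(s:ℤ)^2),
      by linear_combination u*h3r + v*h3q - 3*huv⟩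
  have hT13 : T = 1 ∨ T = 3 := by
    have hle : T ≤ 3 := Int.le_of_dvd (by norm_num) hTd3
    interval_cases T
    · left; rfl
    · exfalso; norm_num at hTd3
    · right; rfl
  rcases hT13 with hT1 | hT3
  · -- T = 1 : new four-term AP of squares
    subst hT1
    have hXn : p*p + q*q = 2*(r*r) := by
      have hz : ((p:ℤ))*p + (q:ℤ)*q = 2*((r:ℤ)*r) := by linear_combination (-1:ℤ)*hT
      exact_mod_cast hz
    have hYn : r*r + s*s = 2*(q*q) := by
      have hz : ((r:ℤ))*r + (s:ℤ)*s = 2*((q:ℤ)*q) := by linear_combination (-1:ℤ)*hY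
      exact_mod_cast hz
    have sqlt : ∀ a b : ℕ, a*a < b*b → a < b := by
      intro a b hab
      by_contra hc
      push_neg at hc
      exact absurd (Nat.mul_le_mul hc hc) (by omega)
    rcases Nat.lt_trichotomy p r with hpr | hpr | hpr
    · -- increasing AP : p, r, q, s
      have hpp := sq_lt_sq_nat' hpr
      have h1 : r*r < q*q := by omega
      have h2 : q*q < s*s := by omega
      refine ⟨p, r, q, s, hpr, sqlt _ _ h1, sqlt _ _ h2, hXn, hYn, ?_⟩
      have : s ≤ h := by rw [hhrs]; exact Nat.le_mul_of_pos_left s hr0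
      exact le_trans this (le_max_right g h)
    · -- degenerate : contradiction
      exfalso
      have hpp : p*p = r*r := by rw [hpr]
      have hq : q*q = r*r := by omega
      have hs : s*s = q*q := by omega
      have hqr' : q = r := Nat.mul_self_inj.mp hq
      have hsq' : s = q := Nat.mul_self_inj.mp hs
      -- k = p*r, 2f+k = q*s, all of p,q,r,s equal
      have hqs' : 2*f + p*r = q*s := by rw [← hkpr]; exact hqs
      have h5 : q = p := by omega
      have h6 : s = p := by omega
      rw [h5, h6, ← hpr] at hqs'
      omega
    · -- decreasing AP : s, q, r, p
      have hpp := sq_lt_sq_nat' hpr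
      have h1 : q*q < r*r := by omega
      have h2 : s*s < q*q := by omega
      refine ⟨s, q, r, p, sqlt _ _ h2, sqlt _ _ h1, hpr, ?_, ?_, ?_⟩
      · omega
      · omega
      · have : p ≤ g := by rw [hgpq]; exact Nat.le_mul_of_pos_right p hq0
        exact le_trans this (le_max_left g h)
  · -- T = 3 : contradiction mod 3
    subst hT3
    have hsum3 : r*r + q*q = 3*(p*p + s*s) := by
      have : ((r:ℤ))*r + (q:ℤ)*q = 3*((p:ℤ)*p + (s:ℤ)*s) := by
        linear_combination hT + hY
      exact_mod_cast this
    have hr3 := sq_mod3 r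
    have hq3 := sq_mod3 q
    have hrr : r*r % 3 = 0 := by omega
    have hqq : q*q % 3 = 0 := by omega
    have h3 : 3 ∣ Nat.gcd r q := Nat.dvd_gcd
      (by have := three_dvd_of_sq r hrr; omega)
      (by have := three_dvd_of_sq q hqq; omega)
    rw [hrq] at h3
    omega

lemma odd_dvd_of_dvd_two_mul {m q : ℕ} (hodd : m % 2 = 1) (h : m ∣ 2*q) : m ∣ q :=
  (Nat.coprime_two_right.mpr (Nat.odd_iff.mpr hodd)).dvd_of_dvd_mul_left h

lemma sq_dvd_sq {a b : ℕ} (h : a*a ∣ b*b) : a ∣ b := by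
  rw [← Nat.pow_two, ← Nat.pow_two] at h
  exact (Nat.pow_dvd_pow_iff (by norm_num)).mp h

/-- **Fermat**: there is no (increasing) four-term arithmetic progression of squares. -/
lemma no_four_sq_AP : ∀ s p q r : ℕ, p < q → q < r → r < s →
    p*p + r*r = 2*(q*q) → q*q + s*s = 2*(r*r) → False := by
  intro s
  induction s using Nat.strong_induction_on with
  | _ s ih =>
    intro p q r hpq hqr hrs e1 e2
    -- p > 0
    have hp0 : 0 < p := by
      rcases Nat.eq_zero_or_pos p with h0 | h0
      · exfalso
        subst h0
        simp at e1
        have := sq_ne_two_mul_sq q r (by omega)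
        omega
      · exact h0
    -- gcd reduction
    set d := Nat.gcd (Nat.gcd p q) (Nat.gcd r s) with hd
    have hdp : d ∣ p := dvd_trans (Nat.gcd_dvd_left _ _) (Nat.gcd_dvd_left _ _)
    have hdq : d ∣ q := dvd_trans (Nat.gcd_dvd_left _ _) (Nat.gcd_dvd_right _ _)
    have hdr : d ∣ r := dvd_trans (Nat.gcd_dvd_right _ _) (Nat.gcd_dvd_left _ _)
    have hds : d ∣ s := dvd_trans (Nat.gcd_dvd_right _ _) (Nat.gcd_dvd_right _ _)
    have hd0 : 0 < d := by
      apply Nat.gcd_pos_of_pos_left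
      exact Nat.gcd_pos_of_pos_left _ hp0
    rcases Nat.lt_or_ge d 2 with hd1 | hd2
    · -- d = 1 : the primitive case
      have hd1' : d = 1 := by omega
      -- all of p,q,r,s odd
      have hodd : p % 2 = 1 ∧ q % 2 = 1 ∧ r % 2 = 1 ∧ s % 2 = 1 := by
        have h8p := sq_mod8 p
        have h8q := sq_mod8 q
        have h8r := sq_mod8 r
        have h8s := sq_mod8 s
        have hcase : (p % 2 = 1 ∧ q % 2 = 1 ∧ r % 2 = 1 ∧ s % 2 = 1) ∨
            (p % 2 = 0 ∧ q % 2 = 0 ∧ r % 2 = 0 ∧ s % 2 = 0) := by omega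
        rcases hcase with h | h
        · exact h
        · exfalso
          have h2 : 2 ∣ d := Nat.dvd_gcd
            (Nat.dvd_gcd (Nat.dvd_of_mod_eq_zero h.1) (Nat.dvd_of_mod_eq_zero h.2.1))
            (Nat.dvd_gcd (Nat.dvd_of_mod_eq_zero h.2.2.1) (Nat.dvd_of_mod_eq_zero h.2.2.2))
          omega
      obtain ⟨hpo, hqo, hro, hso⟩ := hodd
      -- gcd p r = 1
      have hgpr : Nat.Coprime p r := by
        set m := Nat.gcd p r with hm
        have hm1 : m ∣ p := Nat.gcd_dvd_left _ _
        have hm2 : m ∣ r := Nat.gcd_dvd_right _ _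
        have hmodd : m % 2 = 1 := by
          have := Nat.mod_two_eq_zero_or_one m
          rcases this with h0 | h1
          · exfalso
            have h2p : 2 ∣ p := dvd_trans (Nat.dvd_of_mod_eq_zero h0) hm1
            omega
          · exact h1
        have hsq : m*m ∣ 2*(q*q) := by
          rw [← e1]; exact dvd_add (Nat.mul_dvd_mul hm1 hm1) (Nat.mul_dvd_mul hm2 hm2)
        have hmq : m ∣ q := sq_dvd_sq (odd_dvd_of_dvd_two_mul
          (by have := Nat.mul_mod m m 2; rw [hmodd] at this; omega) hsq)
        have hms : m ∣ s := by
          apply sq_dvd_sq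
          have h1 : m*m ∣ 2*(r*r) := Dvd.dvd.mul_left (Nat.mul_dvd_mul hm2 hm2) 2
          have h2 : m*m ∣ q*q := Nat.mul_dvd_mul hmq hmq
          have h3 : s*s = 2*(r*r) - q*q := by omega
          rw [h3]; exact Nat.dvd_sub h1 h2
        have : m ∣ d := Nat.dvd_gcd (Nat.dvd_gcd hm1 hmq) (Nat.dvd_gcd hm2 hms)
        rw [hd1'] at this
        exact Nat.eq_one_of_dvd_one this
      have hgqs : Nat.Coprime q s := by
        set m := Nat.gcd q s with hm
        have hm1 : m ∣ q := Nat.gcd_dvd_left _ _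
        have hm2 : m ∣ s := Nat.gcd_dvd_right _ _
        have hmodd : m % 2 = 1 := by
          have := Nat.mod_two_eq_zero_or_one m
          rcases this with h0 | h1
          · exfalso
            have : 2 ∣ q := dvd_trans (Nat.dvd_of_mod_eq_zero h0) hm1
            omega
          · exact h1
        have hsq : m*m ∣ 2*(r*r) := by
          rw [← e2]; exact dvd_add (Nat.mul_dvd_mul hm1 hm1) (Nat.mul_dvd_mul hm2 hm2)
        have hmr : m ∣ r := sq_dvd_sq (odd_dvd_of_dvd_two_mul
          (by have := Nat.mul_mod m m 2; rw [hmodd] at this; omega) hsq)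
        have hmp : m ∣ p := by
          apply sq_dvd_sq
          have h1 : m*m ∣ 2*(q*q) := Dvd.dvd.mul_left (Nat.mul_dvd_mul hm1 hm1) 2
          have h2 : m*m ∣ r*r := Nat.mul_dvd_mul hmr hmr
          have h3 : p*p = 2*(q*q) - r*r := by omega
          rw [h3]; exact Nat.dvd_sub h1 h2
        have : m ∣ d := Nat.dvd_gcd (Nat.dvd_gcd hmp hm1) (Nat.dvd_gcd hmr hm2)
        rw [hd1'] at this
        exact Nat.eq_one_of_dvd_one this
      -- set up the two equal-area decompositions
      obtain ⟨v, hv⟩ : ∃ v, r = p + 2*v := ⟨(r-p)/2, by omega⟩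
      have hv0 : 0 < v := by omega
      obtain ⟨w2, hw2⟩ : ∃ w2, s = q + 2*w2 := ⟨(s-q)/2, by omega⟩
      have hw20 : 0 < w2 := by omega
      -- (p+v)² + v² = q²   and   (q+w2)² + w2² = r²
      have hu : (p+v)*(p+v) + v*v = q*q := by
        have hexp : p*p + (p+2*v)*(p+2*v) = 2*((p+v)*(p+v) + v*v) := by ring
        rw [hv] at e1
        omega
      have ha : (q+w2)*(q+w2) + w2*w2 = r*r := by
        have hexp : q*q + (q+2*w2)*(q+2*w2) = 2*((q+w2)*(q+w2) + w2*w2) := by ring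
        rw [hw2] at e2
        omega
      -- equal products
      have h4uv : 4*((p+v)*v) + p*p = r*r := by rw [hv]; ring
      have h4ab : 4*((q+w2)*w2) + q*q = s*s := by rw [hw2]; ring
      have huvab : (p+v)*v = (q+w2)*w2 := by omega
      -- coprimality
      have hcuv : Nat.Coprime (p+v) v := by
        set c := Nat.gcd (p+v) v with hc
        have hc1 : c ∣ p+v := Nat.gcd_dvd_left _ _
        have hc2 : c ∣ v := Nat.gcd_dvd_right _ _
        have hcp : c ∣ p := by
          have := Nat.dvd_sub hc1 hc2
          simpa using this
        have hcr : c ∣ r := by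
          rw [hv]
          exact dvd_add hcp (Dvd.dvd.mul_left hc2 2)
        have : c ∣ Nat.gcd p r := Nat.dvd_gcd hcp hcr
        rw [hgpr] at this
        exact Nat.eq_one_of_dvd_one this
      have hcab : Nat.Coprime (q+w2) w2 := by
        set c := Nat.gcd (q+w2) w2 with hc
        have hc1 : c ∣ q+w2 := Nat.gcd_dvd_left _ _
        have hc2 : c ∣ w2 := Nat.gcd_dvd_right _ _
        have hcq : c ∣ q := by
          have := Nat.dvd_sub hc1 hc2
          simpa using this
        have hcs : c ∣ s := by
          rw [hw2]
          exact dvd_add hcq (Dvd.dvd.mul_left hc2 2)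
        have : c ∣ Nat.gcd q s := Nat.dvd_gcd hcq hcs
        rw [hgqs] at this
        exact Nat.eq_one_of_dvd_one this
      -- four-number split : p+v = E*G, v = H*F, q+w2 = E*H, w2 = G*F
      obtain ⟨E, G, H, F, hE0, hG0, hH0, hF0, hEG, hEH, hGF, hHF⟩ :=
        four_split (p+v) v (q+w2) w2 (by omega) hv0 (by omega) huvab hcuv hcab
      -- coprimalities of pieces : E,G divide p+v ; F,H divide v
      have hdEu : E ∣ p+v := ⟨G, hEG⟩
      have hdGu : G ∣ p+v := ⟨E, by rw [hEG, mul_comm]⟩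
      have hdHv : H ∣ v := ⟨F, hHF⟩
      have hdFv : F ∣ v := ⟨H, by rw [hHF, mul_comm]⟩
      have cEF : Nat.Coprime E F := Nat.Coprime.coprime_dvd_left hdEu
        (Nat.Coprime.coprime_dvd_right hdFv hcuv)
      have cEH : Nat.Coprime E H := Nat.Coprime.coprime_dvd_left hdEu
        (Nat.Coprime.coprime_dvd_right hdHv hcuv)
      have cGF : Nat.Coprime G F := Nat.Coprime.coprime_dvd_left hdGu
        (Nat.Coprime.coprime_dvd_right hdFv hcuv)
      have cGH : Nat.Coprime G H := Nat.Coprime.coprime_dvd_left hdGu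
        (Nat.Coprime.coprime_dvd_right hdHv hcuv)
      -- master equation over ℤ
      have hqEH : q + G*F = E*H := by omega
      have master : ((E:ℤ)^2 - (F:ℤ)^2) * ((H:ℤ)^2 - (G:ℤ)^2)
          = 2*((E:ℤ)*F*G*H) := by
        have huz : ((E:ℤ)*G)*((E:ℤ)*G) + ((H:ℤ)*F)*((H:ℤ)*F)
            = ((E:ℤ)*H - (G:ℤ)*F)*((E:ℤ)*H - (G:ℤ)*F) := by
          have hq' : ((q:ℤ)) = (E:ℤ)*H - (G:ℤ)*F := by
            have := congrArg (fun t : ℕ => (t : ℤ)) hqEH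
            push_cast at this
            linarith
          have h1 : ((p:ℤ)+v)*((p:ℤ)+v) + (v:ℤ)*v = (q:ℤ)*q := by exact_mod_cast hu
          have h2 : ((p:ℤ)+v) = (E:ℤ)*G := by exact_mod_cast hEG
          have h3 : ((v:ℤ)) = (H:ℤ)*F := by exact_mod_cast hHF
          rw [h2, h3, hq'] at h1
          exact h1
        ring_nf at huz ⊢
        linarith
      -- divisibility split
      have hEFdvd : ((E:ℤ)*F) ∣ ((H:ℤ)^2 - (G:ℤ)^2) := by
        have hcoEF : IsCoprime ((E:ℤ)*F) ((E:ℤ)^2 - (F:ℤ)^2) := by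
          have c1 : IsCoprime ((E:ℤ)) ((F:ℤ)) := coprime_int_of_nat cEF
          have c2 : IsCoprime ((E:ℤ)^2) ((F:ℤ)^2) := c1.pow
          have cE : IsCoprime ((E:ℤ)) ((E:ℤ)^2 - (F:ℤ)^2) := by
            have : IsCoprime ((E:ℤ)) (-(F:ℤ)^2) := (c1.pow_right).neg_right
            have h5 : -(F:ℤ)^2 + (E:ℤ)*E = (E:ℤ)^2 - (F:ℤ)^2 := by ring
            simpa [h5] using this.add_mul_left_right (E:ℤ)
          have cF : IsCoprime ((F:ℤ)) ((E:ℤ)^2 - (F:ℤ)^2) := by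
            have h6 := ((c1.symm).pow_right (n:=2)).add_mul_left_right (-(F:ℤ))
            rwa [show (E:ℤ)^2 + (F:ℤ) * -(F:ℤ) = (E:ℤ)^2 - (F:ℤ)^2 from by ring] at h6
          exact cE.mul_left cF
        exact hcoEF.dvd_of_dvd_mul_left ⟨2*(G:ℤ)*H, by linear_combination master⟩
      have hGHdvd : ((G:ℤ)*H) ∣ ((E:ℤ)^2 - (F:ℤ)^2) := by
        have hcoGH : IsCoprime ((G:ℤ)*H) ((H:ℤ)^2 - (G:ℤ)^2) := by
          have c1 : IsCoprime ((G:ℤ)) ((H:ℤ)) := coprime_int_of_nat cGH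
          have cG : IsCoprime ((G:ℤ)) ((H:ℤ)^2 - (G:ℤ)^2) := by
            have h6 := (c1.pow_right (n:=2)).add_mul_left_right (-(G:ℤ))
            rwa [show (H:ℤ)^2 + (G:ℤ) * -(G:ℤ) = (H:ℤ)^2 - (G:ℤ)^2 from by ring] at h6
          have cH : IsCoprime ((H:ℤ)) ((H:ℤ)^2 - (G:ℤ)^2) := by
            have : IsCoprime ((H:ℤ)) (-(G:ℤ)^2) := (c1.symm.pow_right).neg_right
            have h5 : -(G:ℤ)^2 + (H:ℤ)*H = (H:ℤ)^2 - (G:ℤ)^2 := by ring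
            simpa [h5] using this.add_mul_left_right (H:ℤ)
          exact (cG.mul_left cH).symm.symm
        exact hcoGH.dvd_of_dvd_mul_left ⟨2*(E:ℤ)*F, by linear_combination master⟩
      obtain ⟨X, hX⟩ := hEFdvd
      obtain ⟨Y, hY⟩ := hGHdvd
      have hEF0 : ((E:ℤ)*F) ≠ 0 := by positivity
      have hGH0 : ((G:ℤ)*H) ≠ 0 := by positivity
      have hXY : X * Y = 2 := by
        have h6 : ((G:ℤ)*H*Y) * ((E:ℤ)*F*X) = 2*((E:ℤ)*F*((G:ℤ)*H)) := by
          rw [← hX, ← hY]; linear_combination master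
        have h7 : ((E:ℤ)*F*((G:ℤ)*H)) * (Y*X) = ((E:ℤ)*F*((G:ℤ)*H)) * 2 := by
          ring_nf; ring_nf at h6; linarith
        have := mul_left_cancel₀ (by positivity : ((E:ℤ)*F*((G:ℤ)*H)) ≠ 0) h7
        linarith
      -- bound for the descent
      have hbound : ∀ t : ℕ, (t = E ∨ t = F ∨ t = G ∨ t = H) → t < s := by
        intro t ht
        have hEle : E ≤ p+v := Nat.le_of_dvd (by omega) hdEu
        have hGle : G ≤ p+v := Nat.le_of_dvd (by omega) hdGu
        have hHle : H ≤ v := Nat.le_of_dvd hv0 hdHv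
        have hFle : F ≤ v := Nat.le_of_dvd hv0 hdFv
        rcases ht with h|h|h|h <;> omega
      -- finish : case analysis on X
      have hX0 : X ≠ 0 := by rintro rfl; simp at hXY
      have hXdvd : X ∣ 2 := ⟨Y, hXY.symm⟩
      have hXcases : X = 1 ∨ X = -1 ∨ X = 2 ∨ X = -2 := by
        have habs : X.natAbs ∣ 2 := by
          have := Int.natAbs_dvd_natAbs.mpr hXdvd
          simpa using this
        have hle : X.natAbs ≤ 2 := Nat.le_of_dvd (by norm_num) habs
        have hne : X.natAbs ≠ 0 := by simpa using hX0
        rcases Int.natAbs_eq X with h | h <;> omega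
      have descend : ∀ e' f' g' h' : ℕ, 0 < e' → 0 < f' → 0 < g' → 0 < h' →
          Nat.Coprime e' f' → Nat.Coprime g' h' → Nat.Coprime e' h' → Nat.Coprime f' g' →
          e'*e' = f'*f' + g'*h' → h'*h' = g'*g' + 2*(e'*f') →
          g' < s → h' < s → False := by
        intro e' f' g' h' a1 a2 a3 a4 a5 a6 a7 a8 a9 a10 b1 b2
        obtain ⟨w, x, y, z, hwx, hxy, hyz, eq1, eq2, hzb⟩ :=
          core_descent e' f' g' h' a1 a2 a3 a4 a5 a6 a7 a8 a9 a10
        have hzs : z < s := lt_of_le_of_lt hzb (by simp [max_lt_iff]; exact ⟨b1, b2⟩)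
        exact ih z hzs w x y hwx hxy hyz eq1 eq2
      rcases hXcases with rfl | rfl | rfl | rfl
      · -- X = 1, Y = 2
        have hYv : Y = 2 := by omega
        subst hYv
        have hn1 : H*H = G*G + E*F := by
          have hz : (H:ℤ)*H = (G:ℤ)*G + (E:ℤ)*F := by linear_combination hX
          exact_mod_cast hz
        have hn2 : E*E = F*F + 2*(G*H) := by
          have hz : (E:ℤ)*E = (F:ℤ)*F + 2*((G:ℤ)*H) := by linear_combination hY
          exact_mod_cast hz
        exact descend H G F E hH0 hG0 hF0 hE0 cGH.symm cEF.symm cEH.symm cGF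
          (by rw [mul_comm F E]; exact hn1) (by rw [mul_comm H G]; exact hn2)
          (hbound F (by tauto)) (hbound E (by tauto))
      · -- X = -1, Y = -2
        have hYv : Y = -2 := by omega
        subst hYv
        have hn1 : G*G = H*H + E*F := by
          have hz : (G:ℤ)*G = (H:ℤ)*H + (E:ℤ)*F := by linear_combination -hX
          exact_mod_cast hz
        have hn2 : F*F = E*E + 2*(G*H) := by
          have hz : (F:ℤ)*F = (E:ℤ)*E + 2*((G:ℤ)*H) := by linear_combination -hY
          exact_mod_cast hz
        exact descend G H E F hG0 hH0 hE0 hF0 cGH cEF cGF cEH.symm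
          hn1 hn2 (hbound E (by tauto)) (hbound F (by tauto))
      · -- X = 2, Y = 1
        have hYv : Y = 1 := by omega
        subst hYv
        have hn1 : H*H = G*G + 2*(E*F) := by
          have hz : (H:ℤ)*H = (G:ℤ)*G + 2*((E:ℤ)*F) := by linear_combination hX
          exact_mod_cast hz
        have hn2 : E*E = F*F + G*H := by
          have hz : (E:ℤ)*E = (F:ℤ)*F + (G:ℤ)*H := by linear_combination hY
          exact_mod_cast hz
        exact descend E F G H hE0 hF0 hG0 hH0 cEF cGH cEH cGF.symm
          hn2 hn1 (hbound G (by tauto)) (hbound H (by tauto))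
      · -- X = -2, Y = -1
        have hYv : Y = -1 := by omega
        subst hYv
        have hn1 : G*G = H*H + 2*(E*F) := by
          have hz : (G:ℤ)*G = (H:ℤ)*H + 2*((E:ℤ)*F) := by linear_combination -hX
          exact_mod_cast hz
        have hn2 : F*F = E*E + G*H := by
          have hz : (F:ℤ)*F = (E:ℤ)*E + (G:ℤ)*H := by linear_combination -hY
          exact_mod_cast hz
        exact descend F E H G hF0 hE0 hH0 hG0 cEF.symm cGH.symm cGF.symm cEH
          (by rw [mul_comm H G]; exact hn2) (by rw [mul_comm F E]; exact hn1)
          (hbound H (by tauto)) (hbound G (by tauto))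
    · -- d ≥ 2 : divide through
      obtain ⟨p', hp'⟩ := hdp
      obtain ⟨q', hq'⟩ := hdq
      obtain ⟨r', hr'⟩ := hdr
      obtain ⟨s', hs'⟩ := hds
      have hdd : 0 < d*d := by positivity
      have e1' : p'*p' + r'*r' = 2*(q'*q') := by
        have : (d*d) * (p'*p' + r'*r') = (d*d) * (2*(q'*q')) := by
          rw [hp', hr', hq'] at e1; ring_nf at e1 ⊢; linarith
        exact Nat.eq_of_mul_eq_mul_left hdd this
      have e2' : q'*q' + s'*s' = 2*(r'*r') := by
        have : (d*d) * (q'*q' + s'*s') = (d*d) * (2*(r'*r')) := by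
          rw [hs', hr', hq'] at e2; ring_nf at e2 ⊢; linarith
        exact Nat.eq_of_mul_eq_mul_left hdd this
      have hpq' : p' < q' := by
        rw [hp', hq'] at hpq; exact Nat.lt_of_mul_lt_mul_left hpq
      have hqr' : q' < r' := by
        rw [hq', hr'] at hqr; exact Nat.lt_of_mul_lt_mul_left hqr
      have hrs' : r' < s' := by
        rw [hr', hs'] at hrs; exact Nat.lt_of_mul_lt_mul_left hrs
      have hs'lt : s' < s := by
        have hs0 : 0 < s' := by omega
        rw [hs']
        have h2s : 2*s' ≤ d*s' := Nat.mul_le_mul_right s' hd2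
        omega
      exact ih s' hs'lt p' q' r' hpq' hqr' hrs' e1' e2'



lemma lower_bound (A : Finset ℤ) (hsq : ∀ a ∈ A, IsSquare a) (hcard : A.card = 4) :
    8 ≤ (A + A).card := by
  -- enumerate A in increasing order
  let f := A.orderIsoOfFin hcard
  set a0 : ℤ := (f 0 : ℤ) with ha0
  set a1 : ℤ := (f 1 : ℤ) with ha1
  set a2 : ℤ := (f 2 : ℤ) with ha2
  set a3 : ℤ := (f 3 : ℤ) with ha3
  have hmem : ∀ i : Fin 4, ((f i : ℤ)) ∈ A := fun i => (f i).2
  have hlt : ∀ i j : Fin 4, i < j → (f i : ℤ) < (f j : ℤ) := by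
    intro i j hij
    exact_mod_cast f.strictMono hij
  have h01 : a0 < a1 := hlt 0 1 (by decide)
  have h12 : a1 < a2 := hlt 1 2 (by decide)
  have h23 : a2 < a3 := hlt 2 3 (by decide)
  by_contra hc
  push_neg at hc
  -- the seven-element chain
  set B : Finset ℤ := {a0+a0, a0+a1, a0+a2, a0+a3, a1+a3, a2+a3, a3+a3} with hB
  have hBsub : B ⊆ A + A := by
    intro x hx
    simp only [hB, Finset.mem_insert, Finset.mem_singleton] at hx
    rcases hx with h|h|h|h|h|h|h <;> subst h <;>
      exact Finset.add_mem_add (hmem _) (hmem _)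
  have hBcard : B.card = 7 := by
    simp only [hB]
    rw [Finset.card_insert_of_notMem (by simp; omega),
        Finset.card_insert_of_notMem (by simp; omega),
        Finset.card_insert_of_notMem (by simp; omega),
        Finset.card_insert_of_notMem (by simp; omega),
        Finset.card_insert_of_notMem (by simp; omega),
        Finset.card_insert_of_notMem (by simp; omega),
        Finset.card_singleton]
  have hBeq : B = A + A := Finset.eq_of_subset_of_card_le hBsub (by omega)
  -- forced equalities
  have hmemB : ∀ x y : Fin 4, (f x : ℤ) + (f y : ℤ) ∈ B := by
    intro x y
    rw [hBeq]
    exact Finset.add_mem_add (hmem _) (hmem _)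
  have e12 : a1 + a2 ∈ B := hmemB 1 2
  have e11 : a1 + a1 ∈ B := hmemB 1 1
  have e22 : a2 + a2 ∈ B := hmemB 2 2
  simp only [hB, Finset.mem_insert, Finset.mem_singleton] at e12 e11 e22
  -- arithmetic progression
  have hap1 : a0 + a2 = 2*a1 := by omega
  have hap2 : a1 + a3 = 2*a2 := by omega
  -- now use squares
  obtain ⟨x0, hx0⟩ := hsq _ (hmem 0)
  obtain ⟨x1, hx1⟩ := hsq _ (hmem 1)
  obtain ⟨x2, hx2⟩ := hsq _ (hmem 2)
  obtain ⟨x3, hx3⟩ := hsq _ (hmem 3)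
  set n0 := x0.natAbs with hn0
  set n1 := x1.natAbs with hn1
  set n2 := x2.natAbs with hn2
  set n3 := x3.natAbs with hn3
  have c0 : a0 = ((n0 * n0 : ℕ) : ℤ) := by rw [hn0, Int.natAbs_mul_self]; exact hx0
  have c1 : a1 = ((n1 * n1 : ℕ) : ℤ) := by rw [hn1, Int.natAbs_mul_self]; exact hx1
  have c2 : a2 = ((n2 * n2 : ℕ) : ℤ) := by rw [hn2, Int.natAbs_mul_self]; exact hx2
  have c3 : a3 = ((n3 * n3 : ℕ) : ℤ) := by rw [hn3, Int.natAbs_mul_self]; exact hx3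
  have sqlt : ∀ a b : ℕ, a*a < b*b → a < b := by
    intro a b hab
    by_contra hcc
    push_neg at hcc
    exact absurd (Nat.mul_le_mul hcc hcc) (by omega)
  have l01 : n0 < n1 := by
    apply sqlt; rw [c0, c1] at h01; exact_mod_cast h01
  have l12 : n1 < n2 := by
    apply sqlt; rw [c1, c2] at h12; exact_mod_cast h12
  have l23 : n2 < n3 := by
    apply sqlt; rw [c2, c3] at h23; exact_mod_cast h23
  have ap1 : n0*n0 + n2*n2 = 2*(n1*n1) := by
    have : ((n0*n0 : ℕ) : ℤ) + ((n2*n2 : ℕ) : ℤ) = 2*((n1*n1 : ℕ) : ℤ) := by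
      rw [← c0, ← c1, ← c2]; omega
    exact_mod_cast this
  have ap2 : n1*n1 + n3*n3 = 2*(n2*n2) := by
    have : ((n1*n1 : ℕ) : ℤ) + ((n3*n3 : ℕ) : ℤ) = 2*((n2*n2 : ℕ) : ℤ) := by
      rw [← c1, ← c2, ← c3]; omega
    exact_mod_cast this
  exact no_four_sq_AP n3 n0 n1 n2 l01 l12 l23 ap1 ap2

end Auxiliary

/-- `N_4(ℤ) = 8`: every 4-element set of integer squares has `|A + A| ≥ 8`, and some
4-element set of integer squares (e.g. `{49, 169, 289, 529}`) attains `|A + A| = 8`. -/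
theorem sqSumsetMin_int_four :
    (∀ A : Finset ℤ, (∀ a ∈ A, IsSquare a) → A.card = 4 → 8 ≤ (A + A).card) ∧
    (∃ A : Finset ℤ, (∀ a ∈ A, IsSquare a) ∧ A.card = 4 ∧ (A + A).card = 8) ∧
    sqSumsetMin ℤ 4 = 8 := by
  have hex : ∃ A : Finset ℤ, (∀ a ∈ A, IsSquare a) ∧ A.card = 4 ∧ (A + A).card = 8 := by
    refine ⟨{49, 169, 289, 529}, ?_, by decide, by decide⟩
    intro a ha
    fin_cases ha
    · exact ⟨7, by norm_num⟩
    · exact ⟨13, by norm_num⟩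
    · exact ⟨17, by norm_num⟩
    · exact ⟨23, by norm_num⟩
  refine ⟨fun A h1 h2 => lower_bound A h1 h2, hex, ?_⟩
  unfold sqSumsetMin
  apply le_antisymm
  · apply Nat.sInf_le
    exact hex
  · have hne : {k | ∃ A : Finset ℤ, (∀ a ∈ A, IsSquare a) ∧ A.card = 4 ∧ (A + A).card = k}.Nonempty :=
      ⟨8, hex⟩
    refine le_csInf hne ?_
    rintro k ⟨A, h1, h2, h3⟩
    rw [← h3]
    exact lower_bound A h1 h2
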